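/- arXiv:1611.04754 — 2 statements merged into one kernel-verified Lean document; each statement's English description precedes it below -/
import Mathlib

section
/- Let n ≥ 3 and let a, c, z be coprime integers with (a,c) ≠ (0,0). Define ω_∞(a,c,z) as the integral over pairs (b,w) ∈ ℝ² satisfying |aⁿw| ≤ 1, |cⁿw| ≤ 1, |zⁿw| ≤ 1, |b| ≤ 1, |(bc + z^(n+1)w)/a| ≤ 1 of (1/|a|) db dw when a ≠ 0 (and the analogous integral with d in place of b when c ≠ 0). Then there exist positive constants c₁, c₂ depending only on n such that c₁/max(|a|,|c|,|z|)^(n+1) ≤ ω_∞(a,c,z) ≤ c₂/max(|a|,|c|,|z|)^(n+1). -/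
open MeasureTheory

/-- The archimedean density ω_∞(a,c,z): an integral over (b,w) ∈ ℝ² (via the chart
with b when a ≠ 0, and the analogous chart with d when c ≠ 0). -/
noncomputable def omegaInf (n : ℕ) (a c z : ℤ) : ℝ :=
  if a ≠ 0 then
    ∫ p in {p : ℝ × ℝ |
        |(a : ℝ) ^ n * p.2| ≤ 1 ∧ |(c : ℝ) ^ n * p.2| ≤ 1 ∧ |(z : ℝ) ^ n * p.2| ≤ 1 ∧
        |p.1| ≤ 1 ∧ |(p.1 * (c : ℝ) + (z : ℝ) ^ (n + 1) * p.2) / (a : ℝ)| ≤ 1},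
      (1 / |(a : ℝ)| : ℝ)
  else
    ∫ p in {p : ℝ × ℝ |
        |(a : ℝ) ^ n * p.2| ≤ 1 ∧ |(c : ℝ) ^ n * p.2| ≤ 1 ∧ |(z : ℝ) ^ n * p.2| ≤ 1 ∧
        |p.1| ≤ 1 ∧ |((a : ℝ) * p.1 - (z : ℝ) ^ (n + 1) * p.2) / (c : ℝ)| ≤ 1},
      (1 / |(c : ℝ)| : ℝ)

private lemma shearV (k : ℝ) :
    MeasurePreserving (fun p : ℝ × ℝ => (p.1, p.2 + k * p.1)) volume volume := by
  rw [Measure.volume_eq_prod]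
  exact (MeasurePreserving.id volume).skew_product
    (by fun_prop) (Filter.Eventually.of_forall fun a => map_add_right_eq_self volume (k*a))

private lemma shearH (k : ℝ) :
    MeasurePreserving (fun p : ℝ × ℝ => (p.1 + k * p.2, p.2)) volume volume := by
  have h1 : MeasurePreserving (Prod.swap : ℝ × ℝ → ℝ × ℝ) volume volume := by
    rw [Measure.volume_eq_prod]; exact Measure.measurePreserving_swap
  exact h1.comp ((shearV k).comp h1)

private lemma mem_rect {A B : ℝ} {p : ℝ × ℝ} :
    p ∈ Set.Icc (-A) A ×ˢ Set.Icc (-B) B ↔ |p.1| ≤ A ∧ |p.2| ≤ B := by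
  rw [Set.mem_prod, Set.mem_Icc, Set.mem_Icc, abs_le, abs_le]

private lemma volume_rect {A B : ℝ} (hA : 0 ≤ A) (hB : 0 ≤ B) :
    volume (Set.Icc (-A) A ×ˢ Set.Icc (-B) B) = ENNReal.ofReal (4*(A*B)) := by
  rw [Measure.volume_eq_prod, Measure.prod_prod, Real.volume_Icc, Real.volume_Icc,
    ← ENNReal.ofReal_mul (by linarith)]
  congr 1; ring

private lemma measurable_rect {A B : ℝ} :
    MeasurableSet (Set.Icc (-A) A ×ˢ Set.Icc (-B) B) :=
  measurableSet_Icc.prod measurableSet_Icc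

private lemma abs_pow_mul_le {x w M : ℝ} {n : ℕ} (hx : |x| ≤ M) (hM : 0 < M)
    (hw : |w| ≤ 1 / M^n) : |x^n * w| ≤ 1 := by
  rw [abs_mul, abs_pow]
  calc |x|^n * |w| ≤ M^n * (1/M^n) :=
        mul_le_mul (pow_le_pow_left₀ (abs_nonneg x) hx n) hw (abs_nonneg w) (by positivity)
    _ = 1 := by field_simp; try ring

private lemma le_of_abs_pow_mul {x w M : ℝ} {n : ℕ} (hx : |x| = M) (hM : 0 < M)
    (h : |x^n * w| ≤ 1) : |w| ≤ 1 / M^n := by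
  rw [abs_mul, abs_pow, hx] at h
  rw [le_div_iff₀ (pow_pos hM n)]
  linarith [h]

private lemma vol_bounds {n : ℕ} {a c z M : ℝ} (h0 : 0 < |a|)
    (hMa : |a| ≤ M) (hMc : |c| ≤ M) (hMz : |z| ≤ M)
    (hmax : |a| = M ∨ |c| = M ∨ |z| = M) :
    ENNReal.ofReal (|a| / M^(n+1)) ≤
      volume {p : ℝ × ℝ | |a^n*p.2| ≤ 1 ∧ |c^n*p.2| ≤ 1 ∧ |z^n*p.2| ≤ 1 ∧ |p.1| ≤ 1 ∧
        |(p.1*c + z^(n+1)*p.2)/a| ≤ 1} ∧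
      volume {p : ℝ × ℝ | |a^n*p.2| ≤ 1 ∧ |c^n*p.2| ≤ 1 ∧ |z^n*p.2| ≤ 1 ∧ |p.1| ≤ 1 ∧
        |(p.1*c + z^(n+1)*p.2)/a| ≤ 1} ≤ ENNReal.ofReal (4* |a| / M^(n+1)) := by
  set S : Set (ℝ × ℝ) := {p : ℝ × ℝ | |a^n*p.2| ≤ 1 ∧ |c^n*p.2| ≤ 1 ∧ |z^n*p.2| ≤ 1 ∧
      |p.1| ≤ 1 ∧ |(p.1*c + z^(n+1)*p.2)/a| ≤ 1} with hSdef
  have hM : 0 < M := lt_of_lt_of_le h0 hMa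
  have hMn : (0:ℝ) < M^n := pow_pos hM n
  have hMn1 : (0:ℝ) < M^(n+1) := pow_pos hM (n+1)
  have hpow : M^(n+1) = M^n * M := pow_succ M n
  have ha0 : a ≠ 0 := abs_pos.mp h0
  have hzpow : |z|^(n+1) ≤ M^(n+1) := pow_le_pow_left₀ (abs_nonneg z) hMz _
  rcases hmax with hA | hB | hC
  · -- |a| = M
    constructor
    · -- lower bound
      have hsub : Set.Icc (-(1/2:ℝ)) (1/2) ×ˢ Set.Icc (-(1/(2*M^n))) (1/(2*M^n)) ⊆ S := by
        rintro p hp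
        obtain ⟨hp1, hp2⟩ := mem_rect.mp hp
        have hw : |p.2| ≤ 1/M^n := hp2.trans (by rw [div_le_div_iff₀ (by positivity) hMn]; nlinarith)
        refine ⟨abs_pow_mul_le hMa hM hw, abs_pow_mul_le hMc hM hw, abs_pow_mul_le hMz hM hw,
          by linarith, ?_⟩
        rw [abs_div, div_le_one h0, hA]
        have e1 : M^(n+1) * (1/(2*M^n)) = M/2 := by rw [hpow]; field_simp; try ring
        calc |p.1*c + z^(n+1)*p.2| ≤ |p.1| * |c| + |z|^(n+1)* |p.2| := by
              refine (abs_add_le _ _).trans ?_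
              rw [abs_mul, abs_mul, abs_pow]
          _ ≤ (1/2)*M + M^(n+1)*(1/(2*M^n)) :=
              add_le_add (mul_le_mul hp1 hMc (abs_nonneg c) (by norm_num))
                (mul_le_mul hzpow hp2 (abs_nonneg _) hMn1.le)
          _ ≤ M := by rw [e1]; linarith
      calc ENNReal.ofReal (|a|/M^(n+1))
          = ENNReal.ofReal (4*((1/2)*(1/(2*M^n)))) := by
            congr 1; rw [hA, hpow]; field_simp; try ring
        _ = volume (Set.Icc (-(1/2:ℝ)) (1/2) ×ˢ Set.Icc (-(1/(2*M^n))) (1/(2*M^n))) :=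
            (volume_rect (by norm_num) (by positivity)).symm
        _ ≤ volume S := measure_mono hsub
    · -- upper bound
      have hsub : S ⊆ Set.Icc (-(1:ℝ)) 1 ×ˢ Set.Icc (-(1/M^n)) (1/M^n) := by
        rintro p ⟨h1, _, _, h4, _⟩
        exact mem_rect.mpr ⟨h4, le_of_abs_pow_mul hA hM h1⟩
      calc volume S ≤ volume (Set.Icc (-(1:ℝ)) 1 ×ˢ Set.Icc (-(1/M^n)) (1/M^n)) :=
            measure_mono hsub
        _ = ENNReal.ofReal (4*(1*(1/M^n))) := volume_rect (by norm_num) (by positivity)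
        _ ≤ ENNReal.ofReal (4* |a|/M^(n+1)) := by
            apply ENNReal.ofReal_le_ofReal
            rw [hA, hpow]; rw [mul_div_assoc]
            apply mul_le_mul_of_nonneg_left _ (by norm_num : (0:ℝ) ≤ 4)
            rw [one_mul, div_le_div_iff₀ hMn (by positivity)]
            nlinarith
  · -- |c| = M
    have hc0 : c ≠ 0 := by
      intro h; rw [h, abs_zero] at hB; exact absurd hB.symm hM.ne'
    set k : ℝ := z^(n+1)/c with hk
    have keyid : ∀ p : ℝ × ℝ, (p.1 + k*p.2)*c = p.1*c + z^(n+1)*p.2 := by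
      intro p; rw [hk]; field_simp; try ring
    have hknorm : |k| ≤ M^n := by
      rw [hk, abs_div, abs_pow, hB, div_le_iff₀ hM]
      calc |z|^(n+1) ≤ M^(n+1) := hzpow
        _ = M^n*M := hpow
    constructor
    · -- lower
      have hsub : (fun p : ℝ × ℝ => (p.1 + k * p.2, p.2)) ⁻¹'
          (Set.Icc (-(|a|/(2*M))) (|a|/(2*M)) ×ˢ Set.Icc (-(1/(2*M^n))) (1/(2*M^n))) ⊆ S := by
        rintro p hp
        obtain ⟨hq1, hq2⟩ := mem_rect.mp hp
        have hw : |p.2| ≤ 1/M^n := hq2.trans (by rw [div_le_div_iff₀ (by positivity) hMn]; nlinarith)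
        have hk2 : |k*p.2| ≤ 1/2 := by
          rw [abs_mul]
          calc |k| * |p.2| ≤ M^n*(1/(2*M^n)) :=
                mul_le_mul hknorm hq2 (abs_nonneg _) hMn.le
            _ = 1/2 := by field_simp; try ring
        have ha2M : |a|/(2*M) ≤ 1/2 := by
          rw [div_le_div_iff₀ (by positivity) (by norm_num)]; linarith
        have h14 : |p.1| ≤ 1 := by
          have h : |p.1| ≤ |p.1 + k*p.2| + |k*p.2| := by
            calc |p.1| = |(p.1 + k*p.2) + -(k*p.2)| := by ring_nf
              _ ≤ |p.1 + k*p.2| + |-(k*p.2)| := abs_add_le _ _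
              _ = |p.1 + k*p.2| + |k*p.2| := by rw [abs_neg]
          linarith
        refine ⟨abs_pow_mul_le hMa hM hw, abs_pow_mul_le hMc hM hw, abs_pow_mul_le hMz hM hw,
          h14, ?_⟩
        rw [abs_div, div_le_one h0, ← keyid p, abs_mul, hB]
        have e1 : |a|/(2*M)*M = |a|/2 := by field_simp; try ring
        calc |p.1+k*p.2| *M ≤ (|a|/(2*M))*M := mul_le_mul_of_nonneg_right hq1 hM.le
          _ ≤ |a| := by rw [e1]; linarith
      calc ENNReal.ofReal (|a|/M^(n+1))
          = ENNReal.ofReal (4*((|a|/(2*M))*(1/(2*M^n)))) := by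
            congr 1; rw [hpow]; field_simp; try ring
        _ = volume ((Set.Icc (-(|a|/(2*M))) (|a|/(2*M)) ×ˢ Set.Icc (-(1/(2*M^n))) (1/(2*M^n)))) :=
            (volume_rect (by positivity) (by positivity)).symm
        _ = volume ((fun p : ℝ × ℝ => (p.1 + k * p.2, p.2)) ⁻¹'
            (Set.Icc (-(|a|/(2*M))) (|a|/(2*M)) ×ˢ Set.Icc (-(1/(2*M^n))) (1/(2*M^n)))) :=
            ((shearH k).measure_preimage measurable_rect.nullMeasurableSet).symm
        _ ≤ volume S := measure_mono hsub
    · -- upper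
      have hsub : S ⊆ (fun p : ℝ × ℝ => (p.1 + k * p.2, p.2)) ⁻¹'
          (Set.Icc (-(|a|/M)) (|a|/M) ×ˢ Set.Icc (-(1/M^n)) (1/M^n)) := by
        rintro p ⟨h1, h2, _, _, h5⟩
        rw [Set.mem_preimage]
        apply mem_rect.mpr
        refine ⟨?_, le_of_abs_pow_mul hB hM h2⟩
        rw [abs_div, div_le_one h0] at h5
        rw [le_div_iff₀ hM, ← hB, ← abs_mul, keyid p]
        exact h5
      calc volume S ≤ volume ((fun p : ℝ × ℝ => (p.1 + k * p.2, p.2)) ⁻¹'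
            (Set.Icc (-(|a|/M)) (|a|/M) ×ˢ Set.Icc (-(1/M^n)) (1/M^n))) := measure_mono hsub
        _ = volume ((Set.Icc (-(|a|/M)) (|a|/M) ×ˢ Set.Icc (-(1/M^n)) (1/M^n))) :=
            (shearH k).measure_preimage measurable_rect.nullMeasurableSet
        _ = ENNReal.ofReal (4*((|a|/M)*(1/M^n))) := volume_rect (by positivity) (by positivity)
        _ = ENNReal.ofReal (4* |a|/M^(n+1)) := by
            congr 1; rw [hpow]; field_simp; try ring
  · -- |z| = M
    have hz0 : z ≠ 0 := by
      intro h; rw [h, abs_zero] at hC; exact absurd hC.symm hM.ne'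
    set k : ℝ := c/z^(n+1) with hk
    have hzn0 : z^(n+1) ≠ 0 := pow_ne_zero _ hz0
    have keyid : ∀ p : ℝ × ℝ, (p.2 + k*p.1)*z^(n+1) = p.1*c + z^(n+1)*p.2 := by
      intro p; rw [hk]; field_simp; try ring
    have habsz : |z^(n+1)| = M^(n+1) := by rw [abs_pow, hC]
    have hknorm : |k| ≤ 1/M^n := by
      rw [hk, abs_div, abs_pow, hC, div_le_div_iff₀ (by positivity) hMn]
      calc |c| * M^n ≤ M * M^n := mul_le_mul_of_nonneg_right hMc hMn.le
        _ = 1 * M^(n+1) := by rw [hpow]; ring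
    constructor
    · -- lower
      have hsub : (fun p : ℝ × ℝ => (p.1, p.2 + k * p.1)) ⁻¹'
          (Set.Icc (-(1/2:ℝ)) (1/2) ×ˢ Set.Icc (-(|a|/(2*M^(n+1)))) (|a|/(2*M^(n+1)))) ⊆ S := by
        rintro p hp
        obtain ⟨hq1, hq2⟩ := mem_rect.mp hp
        have hk2 : |k*p.1| ≤ 1/(2*M^n) := by
          rw [abs_mul]
          calc |k| * |p.1| ≤ (1/M^n)*(1/2) :=
                mul_le_mul hknorm hq1 (abs_nonneg _) (by positivity)
            _ = 1/(2*M^n) := by ring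
        have ha2M : |a|/(2*M^(n+1)) ≤ 1/(2*M^n) := by
          rw [div_le_div_iff₀ (by positivity) (by positivity), hpow]; nlinarith
        have hw : |p.2| ≤ 1/M^n := by
          have h : |p.2| ≤ |p.2 + k*p.1| + |k*p.1| := by
            calc |p.2| = |(p.2 + k*p.1) + -(k*p.1)| := by ring_nf
              _ ≤ |p.2 + k*p.1| + |-(k*p.1)| := abs_add_le _ _
              _ = |p.2 + k*p.1| + |k*p.1| := by rw [abs_neg]
          have e2 : 1/(2*M^n) + 1/(2*M^n) = 1/M^n := by field_simp; try ring
          linarith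
        refine ⟨abs_pow_mul_le hMa hM hw, abs_pow_mul_le hMc hM hw, abs_pow_mul_le hMz hM hw,
          by linarith, ?_⟩
        rw [abs_div, div_le_one h0, ← keyid p, abs_mul, habsz]
        have e1 : |a|/(2*M^(n+1))*M^(n+1) = |a|/2 := by field_simp; try ring
        calc |p.2+k*p.1| *M^(n+1) ≤ (|a|/(2*M^(n+1)))*M^(n+1) :=
              mul_le_mul_of_nonneg_right hq2 hMn1.le
          _ ≤ |a| := by rw [e1]; linarith
      calc ENNReal.ofReal (|a|/M^(n+1))
          = ENNReal.ofReal (4*((1/2)*(|a|/(2*M^(n+1))))) := by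
            congr 1; field_simp; try ring
        _ = volume ((Set.Icc (-(1/2:ℝ)) (1/2) ×ˢ
            Set.Icc (-(|a|/(2*M^(n+1)))) (|a|/(2*M^(n+1))))) :=
            (volume_rect (by norm_num) (by positivity)).symm
        _ = volume ((fun p : ℝ × ℝ => (p.1, p.2 + k * p.1)) ⁻¹'
            (Set.Icc (-(1/2:ℝ)) (1/2) ×ˢ Set.Icc (-(|a|/(2*M^(n+1)))) (|a|/(2*M^(n+1))))) :=
            ((shearV k).measure_preimage measurable_rect.nullMeasurableSet).symm
        _ ≤ volume S := measure_mono hsub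
    · -- upper
      have hsub : S ⊆ (fun p : ℝ × ℝ => (p.1, p.2 + k * p.1)) ⁻¹'
          (Set.Icc (-(1:ℝ)) 1 ×ˢ Set.Icc (-(|a|/M^(n+1))) (|a|/M^(n+1))) := by
        rintro p ⟨_, _, _, h4, h5⟩
        rw [Set.mem_preimage]
        apply mem_rect.mpr
        refine ⟨h4, ?_⟩
        rw [abs_div, div_le_one h0] at h5
        rw [le_div_iff₀ hMn1, ← habsz, ← abs_mul, keyid p]
        exact h5
      calc volume S ≤ volume ((fun p : ℝ × ℝ => (p.1, p.2 + k * p.1)) ⁻¹'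
            (Set.Icc (-(1:ℝ)) 1 ×ˢ Set.Icc (-(|a|/M^(n+1))) (|a|/M^(n+1)))) := measure_mono hsub
        _ = volume ((Set.Icc (-(1:ℝ)) 1 ×ˢ Set.Icc (-(|a|/M^(n+1))) (|a|/M^(n+1)))) :=
            (shearV k).measure_preimage measurable_rect.nullMeasurableSet
        _ = ENNReal.ofReal (4*(1*(|a|/M^(n+1)))) := volume_rect (by norm_num) (by positivity)
        _ = ENNReal.ofReal (4* |a|/M^(n+1)) := by congr 1; ring

private lemma vol_zero {n : ℕ} {c z M : ℝ} (hn : n ≠ 0) (h0 : 0 < |c|)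
    (hMc : |c| ≤ M) (hMz : |z| ≤ M) (hmax : |c| = M ∨ |z| = M) :
    volume {p : ℝ × ℝ | |(0:ℝ)^n*p.2| ≤ 1 ∧ |c^n*p.2| ≤ 1 ∧ |z^n*p.2| ≤ 1 ∧ |p.1| ≤ 1 ∧
      |((0:ℝ)*p.1 - z^(n+1)*p.2)/c| ≤ 1} = ENNReal.ofReal (4*(|c|/M^(n+1))) := by
  have hM : 0 < M := lt_of_lt_of_le h0 hMc
  have hMn : (0:ℝ) < M^n := pow_pos hM n
  have hMn1 : (0:ℝ) < M^(n+1) := pow_pos hM (n+1)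
  have hpow : M^(n+1) = M^n*M := pow_succ M n
  have hc0 : c ≠ 0 := abs_pos.mp h0
  have hzpow : |z|^(n+1) ≤ M^(n+1) := pow_le_pow_left₀ (abs_nonneg z) hMz _
  have hset : {p : ℝ × ℝ | |(0:ℝ)^n*p.2| ≤ 1 ∧ |c^n*p.2| ≤ 1 ∧ |z^n*p.2| ≤ 1 ∧ |p.1| ≤ 1 ∧
      |((0:ℝ)*p.1 - z^(n+1)*p.2)/c| ≤ 1} =
      Set.Icc (-(1:ℝ)) 1 ×ˢ Set.Icc (-(|c|/M^(n+1))) (|c|/M^(n+1)) := by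
    apply Set.Subset.antisymm
    · rintro p ⟨h1, h2, h3, h4, h5⟩
      refine mem_rect.mpr ⟨h4, ?_⟩
      rw [abs_div, div_le_one h0] at h5
      have h5' : |z^(n+1) * p.2| ≤ |c| := by
        calc |z^(n+1)*p.2| = |0*p.1 - z^(n+1)*p.2| := by rw [zero_mul, zero_sub, abs_neg]
          _ ≤ |c| := h5
      rcases hmax with hB | hC
      · calc |p.2| ≤ 1/M^n := le_of_abs_pow_mul hB hM h2
          _ = |c|/M^(n+1) := by rw [hpow, hB]; field_simp
      · rw [abs_mul, abs_pow, hC] at h5'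
        rw [le_div_iff₀ hMn1]
        calc |p.2| * M^(n+1) = M^(n+1) * |p.2| := mul_comm _ _
          _ ≤ |c| := h5'
    · rintro p hp
      obtain ⟨hp1, hp2⟩ := mem_rect.mp hp
      have hcM : |c|/M^(n+1) ≤ 1/M^n := by
        rw [div_le_div_iff₀ hMn1 hMn, hpow]; nlinarith
      have hw : |p.2| ≤ 1/M^n := hp2.trans hcM
      refine ⟨?_, abs_pow_mul_le hMc hM hw, abs_pow_mul_le hMz hM hw, hp1, ?_⟩
      · rw [zero_pow hn, zero_mul, abs_zero]; norm_num
      · rw [abs_div, div_le_one h0, zero_mul, zero_sub, abs_neg, abs_mul, abs_pow]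
        calc |z|^(n+1) * |p.2| ≤ M^(n+1) * (|c|/M^(n+1)) :=
              mul_le_mul hzpow hp2 (abs_nonneg _) hMn1.le
          _ = |c| := by field_simp
  rw [hset, volume_rect (by norm_num) (by positivity)]
  congr 1; ring

/-- For n ≥ 3 there exist positive constants c₁, c₂ (depending only on n) such that
for all coprime integers a, c, z with (a,c) ≠ (0,0),
c₁/max(|a|,|c|,|z|)^(n+1) ≤ ω_∞(a,c,z) ≤ c₂/max(|a|,|c|,|z|)^(n+1). -/
theorem omegaInf_asymp (n : ℕ) (hn : 3 ≤ n) :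
    ∃ c₁ c₂ : ℝ, 0 < c₁ ∧ 0 < c₂ ∧
      ∀ a c z : ℤ, Int.gcd (Int.gcd a c) z = 1 → (a, c) ≠ (0, 0) →
        c₁ / (max (max |(a : ℝ)| |(c : ℝ)|) |(z : ℝ)|) ^ (n + 1) ≤ omegaInf n a c z ∧
        omegaInf n a c z ≤ c₂ / (max (max |(a : ℝ)| |(c : ℝ)|) |(z : ℝ)|) ^ (n + 1) := by
  refine ⟨1, 4, one_pos, by norm_num, fun a c z _ hac => ?_⟩
  have hn0 : n ≠ 0 := by omega
  by_cases ha : a = 0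
  · subst ha
    have hc0 : c ≠ 0 := by
      intro h; exact hac (by simp [h])
    have h0 : 0 < |(c:ℝ)| := by
      rw [abs_pos]; exact_mod_cast hc0
    set M : ℝ := max (max |((0:ℤ):ℝ)| |(c:ℝ)|) |(z:ℝ)| with hM
    have hMc : |(c:ℝ)| ≤ M := le_trans (le_max_right _ _) (le_max_left _ _)
    have hMz : |(z:ℝ)| ≤ M := le_max_right _ _
    have hMpos : 0 < M := lt_of_lt_of_le h0 hMc
    have hMn1 : (0:ℝ) < M^(n+1) := pow_pos hMpos (n+1)
    have hmax : |(c:ℝ)| = M ∨ |(z:ℝ)| = M := by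
      rcases max_choice (max |((0:ℤ):ℝ)| |(c:ℝ)|) |(z:ℝ)| with h | h
      · rcases max_choice |((0:ℤ):ℝ)| |(c:ℝ)| with h' | h'
        · exfalso
          have hM0 : M = 0 := by rw [hM, h, h']; simp
          exact absurd hM0 hMpos.ne'
        · left; rw [hM, h, h']
      · right; rw [hM, h]
    have hω : omegaInf n 0 c z = 4/M^(n+1) := by
      simp only [omegaInf]
      rw [if_neg (by simp)]
      simp only [Int.cast_zero]
      rw [setIntegral_const, measureReal_def, vol_zero hn0 h0 hMc hMz hmax, smul_eq_mul,
        ENNReal.toReal_ofReal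
          (mul_nonneg (by norm_num) (div_nonneg (abs_nonneg _) hMn1.le))]
      field_simp
    rw [hω]
    constructor
    · gcongr; norm_num
    · exact le_rfl
  · have h0 : 0 < |(a:ℝ)| := by
      rw [abs_pos]; exact_mod_cast ha
    set M : ℝ := max (max |(a:ℝ)| |(c:ℝ)|) |(z:ℝ)| with hM
    have hMa : |(a:ℝ)| ≤ M := le_trans (le_max_left _ _) (le_max_left _ _)
    have hMc : |(c:ℝ)| ≤ M := le_trans (le_max_right _ _) (le_max_left _ _)
    have hMz : |(z:ℝ)| ≤ M := le_max_right _ _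
    have hMpos : 0 < M := lt_of_lt_of_le h0 hMa
    have hMn1 : (0:ℝ) < M^(n+1) := pow_pos hMpos (n+1)
    have hmax : |(a:ℝ)| = M ∨ |(c:ℝ)| = M ∨ |(z:ℝ)| = M := by
      rcases max_choice (max |(a:ℝ)| |(c:ℝ)|) |(z:ℝ)| with h | h
      · rcases max_choice |(a:ℝ)| |(c:ℝ)| with h' | h'
        · left; rw [hM, h, h']
        · right; left; rw [hM, h, h']
      · right; right; rw [hM, h]
    obtain ⟨hlo, hup⟩ := vol_bounds (n := n) h0 hMa hMc hMz hmax
    have hω : omegaInf n a c z =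
        (volume {p : ℝ × ℝ | |(a:ℝ)^n*p.2| ≤ 1 ∧ |(c:ℝ)^n*p.2| ≤ 1 ∧ |(z:ℝ)^n*p.2| ≤ 1 ∧
          |p.1| ≤ 1 ∧ |(p.1*(c:ℝ) + (z:ℝ)^(n+1)*p.2)/(a:ℝ)| ≤ 1}).toReal * (1/|(a:ℝ)|) := by
      simp only [omegaInf]
      rw [if_pos ha, setIntegral_const, measureReal_def, smul_eq_mul]
    have hfin : volume {p : ℝ × ℝ | |(a:ℝ)^n*p.2| ≤ 1 ∧ |(c:ℝ)^n*p.2| ≤ 1 ∧ |(z:ℝ)^n*p.2| ≤ 1 ∧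
          |p.1| ≤ 1 ∧ |(p.1*(c:ℝ) + (z:ℝ)^(n+1)*p.2)/(a:ℝ)| ≤ 1} ≠ ⊤ :=
      (lt_of_le_of_lt hup ENNReal.ofReal_lt_top).ne
    have h1 : |(a:ℝ)|/M^(n+1) ≤ (volume {p : ℝ × ℝ | |(a:ℝ)^n*p.2| ≤ 1 ∧ |(c:ℝ)^n*p.2| ≤ 1 ∧
        |(z:ℝ)^n*p.2| ≤ 1 ∧ |p.1| ≤ 1 ∧ |(p.1*(c:ℝ) + (z:ℝ)^(n+1)*p.2)/(a:ℝ)| ≤ 1}).toReal := by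
      have h := ENNReal.toReal_mono hfin hlo
      rwa [ENNReal.toReal_ofReal (div_nonneg (abs_nonneg _) hMn1.le)] at h
    have h2 : (volume {p : ℝ × ℝ | |(a:ℝ)^n*p.2| ≤ 1 ∧ |(c:ℝ)^n*p.2| ≤ 1 ∧
        |(z:ℝ)^n*p.2| ≤ 1 ∧ |p.1| ≤ 1 ∧ |(p.1*(c:ℝ) + (z:ℝ)^(n+1)*p.2)/(a:ℝ)| ≤ 1}).toReal ≤
        4*|(a:ℝ)|/M^(n+1) := by
      have h := ENNReal.toReal_mono ENNReal.ofReal_ne_top hup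
      rwa [ENNReal.toReal_ofReal
        (div_nonneg (mul_nonneg (by norm_num) (abs_nonneg _)) hMn1.le)] at h
    rw [hω]
    constructor
    · calc (1:ℝ)/M^(n+1) = (|(a:ℝ)|/M^(n+1)) * (1/|(a:ℝ)|) := by field_simp
        _ ≤ _ := mul_le_mul_of_nonneg_right h1 (by positivity)
    · calc _ ≤ (4*|(a:ℝ)|/M^(n+1)) * (1/|(a:ℝ)|) :=
            mul_le_mul_of_nonneg_right h2 (by positivity)
        _ = 4/M^(n+1) := by field_simp; try ring
end

section
/- Let n ≥ 2 and B ≥ 1. Then V₃(B) := ∫∫∫∫∫ over (a,c,d,z,w) ∈ ℝ⁵ with 1 ≤ |w| ≤ B, |a²w| ≤ B, |c²w| ≤ B, |z²w| ≤ B, |(ad − z³w)/c| ≤ B, |d| ≤ B of (1/|c|) da dc dd dz dw equals B² log B multiplied by 2∫∫∫∫_{|a|,|c|,|z|,|(ad−z³)/c|,|d| ≤ 1} (1/|c|) da dc dd dz (the case n = 2). -/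
open MeasureTheory Set Function
open scoped ENNReal

noncomputable section

def S5 (B : ℝ) : Set (ℝ × ℝ × ℝ × ℝ × ℝ) :=
  {v : ℝ × ℝ × ℝ × ℝ × ℝ |
        1 ≤ |v.2.2.2.2| ∧ |v.2.2.2.2| ≤ B ∧
        |v.1 ^ 2 * v.2.2.2.2| ≤ B ∧ |v.2.1 ^ 2 * v.2.2.2.2| ≤ B ∧
        |v.2.2.2.1 ^ 2 * v.2.2.2.2| ≤ B ∧
        |(v.1 * v.2.2.1 - v.2.2.2.1 ^ 3 * v.2.2.2.2) / v.2.1| ≤ B ∧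
        |v.2.2.1| ≤ B}

def S4 (ε : ℝ) : Set (ℝ × ℝ × ℝ × ℝ) :=
  {v : ℝ × ℝ × ℝ × ℝ |
          |v.1| ≤ 1 ∧ |v.2.1| ≤ 1 ∧ |v.2.2.2| ≤ 1 ∧
          |(v.1 * v.2.2.1 - v.2.2.2 ^ 3 * ε) / v.2.1| ≤ 1 ∧ |v.2.2.1| ≤ 1}

def G5 (B : ℝ) : ℝ × ℝ × ℝ × ℝ × ℝ → ℝ≥0∞ :=
  (S5 B).indicator fun v => ENNReal.ofReal (1 / |v.2.1|)

def G4 (ε : ℝ) : ℝ × ℝ × ℝ × ℝ → ℝ≥0∞ :=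
  (S4 ε).indicator fun v => ENNReal.ofReal (1 / |v.2.1|)

lemma measurableSet_S5 (B : ℝ) : MeasurableSet (S5 B) := by
  unfold S5
  simp only [setOf_and]
  refine MeasurableSet.inter ?_ (MeasurableSet.inter ?_ (MeasurableSet.inter ?_
    (MeasurableSet.inter ?_ (MeasurableSet.inter ?_ (MeasurableSet.inter ?_ ?_))))) <;>
  · apply measurableSet_le (by fun_prop) (by fun_prop)

lemma measurableSet_S4 (ε : ℝ) : MeasurableSet (S4 ε) := by
  unfold S4
  simp only [setOf_and]
  refine MeasurableSet.inter ?_ (MeasurableSet.inter ?_ (MeasurableSet.inter ?_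
    (MeasurableSet.inter ?_ ?_))) <;>
  · apply measurableSet_le (by fun_prop) (by fun_prop)

lemma meas_G5 (B : ℝ) : Measurable (G5 B) :=
  (by fun_prop : Measurable fun v : ℝ × ℝ × ℝ × ℝ × ℝ => ENNReal.ofReal (1 / |v.2.1|)).indicator
    (measurableSet_S5 B)

lemma meas_G4 (ε : ℝ) : Measurable (G4 ε) :=
  (by fun_prop : Measurable fun v : ℝ × ℝ × ℝ × ℝ => ENNReal.ofReal (1 / |v.2.1|)).indicator
    (measurableSet_S4 ε)

lemma step2 {α β : Type*} [MeasureSpace α] [MeasureSpace β]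
    [SigmaFinite (volume : Measure α)] [SigmaFinite (volume : Measure β)]
    (G : α × β → ℝ≥0∞) (hG : Measurable G) :
    ∫⁻ v, G v = ∫⁻ x, ∫⁻ y, G (x, y) := by
  rw [Measure.volume_eq_prod]; exact lintegral_prod G hG.aemeasurable

lemma meas_nest1 (G : ℝ × ℝ → ℝ≥0∞) (hG : Measurable G) :
    Measurable fun x : ℝ => ∫⁻ y, G (x, y) :=
  hG.lintegral_prod_right'

lemma meas_nest2 (G : ℝ × ℝ × ℝ → ℝ≥0∞) (hG : Measurable G) :
    Measurable fun x : ℝ => ∫⁻ y, ∫⁻ z, G (x, y, z) := by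
  have h : Measurable fun q : (ℝ × ℝ) × ℝ => G (q.1.1, q.1.2, q.2) := hG.comp (by fun_prop)
  exact meas_nest1 _ h.lintegral_prod_right'

lemma meas_nest3 (G : ℝ × ℝ × ℝ × ℝ → ℝ≥0∞) (hG : Measurable G) :
    Measurable fun x : ℝ => ∫⁻ y, ∫⁻ z, ∫⁻ u, G (x, y, z, u) := by
  have h : Measurable fun q : ((ℝ × ℝ) × ℝ) × ℝ => G (q.1.1.1, q.1.1.2, q.1.2, q.2) :=
    hG.comp (by fun_prop)
  have h2 : Measurable fun q : (ℝ × ℝ) × ℝ => ∫⁻ u, G (q.1.1, q.1.2, q.2, u) :=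
    h.lintegral_prod_right'
  exact meas_nest1 _ h2.lintegral_prod_right'

lemma expand4 (G : ℝ × ℝ × ℝ × ℝ → ℝ≥0∞) (hG : Measurable G) :
    ∫⁻ v, G v = ∫⁻ a, ∫⁻ c, ∫⁻ d, ∫⁻ z, G (a, c, d, z) := by
  rw [step2 _ hG]
  refine lintegral_congr fun a => ?_
  rw [step2 (fun y => G (a, y)) (hG.comp (by fun_prop : Measurable fun y => (a, y)))]
  refine lintegral_congr fun c => ?_
  have h : Measurable fun y : ℝ × ℝ => G (a, c, y) := hG.comp (by fun_prop)
  rw [step2 _ h]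

lemma expand5 (G : ℝ × ℝ × ℝ × ℝ × ℝ → ℝ≥0∞) (hG : Measurable G) :
    ∫⁻ v, G v = ∫⁻ w, ∫⁻ a, ∫⁻ c, ∫⁻ d, ∫⁻ z, G (a, c, d, z, w) := by
  have e1 : ∫⁻ v, G v = ∫⁻ a, ∫⁻ c, ∫⁻ d, ∫⁻ z, ∫⁻ w, G (a, c, d, z, w) := by
    rw [step2 _ hG]
    refine lintegral_congr fun a => ?_
    rw [step2 (fun y => G (a, y)) (hG.comp (by fun_prop : Measurable fun y => (a, y)))]
    refine lintegral_congr fun c => ?_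
    have h : Measurable fun y : ℝ × ℝ × ℝ => G (a, c, y) := hG.comp (by fun_prop)
    rw [step2 _ h]
    refine lintegral_congr fun d => ?_
    have h2 : Measurable fun y : ℝ × ℝ => G (a, c, d, y) := hG.comp (by fun_prop)
    rw [step2 _ h2]
  rw [e1]
  -- swap w outwards, innermost first
  have s1 : ∀ a c d : ℝ, (∫⁻ z, ∫⁻ w, G (a, c, d, z, w)) = ∫⁻ w, ∫⁻ z, G (a, c, d, z, w) :=
    fun a c d => lintegral_lintegral_swap (hG.comp (by fun_prop : Measurable
      fun p : ℝ × ℝ => (a, c, d, p.1, p.2))).aemeasurable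
  have s2 : ∀ a c : ℝ, (∫⁻ d, ∫⁻ w, ∫⁻ z, G (a, c, d, z, w))
      = ∫⁻ w, ∫⁻ d, ∫⁻ z, G (a, c, d, z, w) := by
    intro a c
    refine lintegral_lintegral_swap ?_
    have h : Measurable fun q : (ℝ × ℝ) × ℝ => G (a, c, q.1.1, q.2, q.1.2) :=
      hG.comp (by fun_prop)
    exact h.lintegral_prod_right'.aemeasurable
  have s3 : ∀ a : ℝ, (∫⁻ c, ∫⁻ w, ∫⁻ d, ∫⁻ z, G (a, c, d, z, w))
      = ∫⁻ w, ∫⁻ c, ∫⁻ d, ∫⁻ z, G (a, c, d, z, w) := by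
    intro a
    refine lintegral_lintegral_swap ?_
    have h : Measurable fun q : ((ℝ × ℝ) × ℝ) × ℝ => G (a, q.1.1.1, q.1.2, q.2, q.1.1.2) :=
      hG.comp (by fun_prop)
    exact (h.lintegral_prod_right'.lintegral_prod_right').aemeasurable
  have s4 : (∫⁻ a, ∫⁻ w, ∫⁻ c, ∫⁻ d, ∫⁻ z, G (a, c, d, z, w))
      = ∫⁻ w, ∫⁻ a, ∫⁻ c, ∫⁻ d, ∫⁻ z, G (a, c, d, z, w) := by
    refine lintegral_lintegral_swap ?_
    have h : Measurable fun q : (((ℝ × ℝ) × ℝ) × ℝ) × ℝ =>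
        G (q.1.1.1.1, q.1.1.2, q.1.2, q.2, q.1.1.1.2) := hG.comp (by fun_prop)
    exact (h.lintegral_prod_right'.lintegral_prod_right'.lintegral_prod_right').aemeasurable
  calc ∫⁻ a, ∫⁻ c, ∫⁻ d, ∫⁻ z, ∫⁻ w, G (a, c, d, z, w)
      = ∫⁻ a, ∫⁻ c, ∫⁻ d, ∫⁻ w, ∫⁻ z, G (a, c, d, z, w) :=
        lintegral_congr fun a => lintegral_congr fun c => lintegral_congr fun d => s1 a c d
    _ = ∫⁻ a, ∫⁻ c, ∫⁻ w, ∫⁻ d, ∫⁻ z, G (a, c, d, z, w) :=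
        lintegral_congr fun a => lintegral_congr fun c => s2 a c
    _ = ∫⁻ a, ∫⁻ w, ∫⁻ c, ∫⁻ d, ∫⁻ z, G (a, c, d, z, w) :=
        lintegral_congr fun a => s3 a
    _ = ∫⁻ w, ∫⁻ a, ∫⁻ c, ∫⁻ d, ∫⁻ z, G (a, c, d, z, w) := s4

lemma lintegral_scale (g : ℝ → ℝ≥0∞) (hg : Measurable g) {s : ℝ} (hs : 0 < s) :
    ∫⁻ x, g x = ENNReal.ofReal s * ∫⁻ x, g (s * x) := by
  have h1 : ∫⁻ x, g (s * x) = ∫⁻ y, g y ∂(Measure.map (s * ·) volume) :=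
    (lintegral_map hg (measurable_const_mul s)).symm
  rw [h1, Real.map_volume_mul_left hs.ne', lintegral_smul_measure, smul_eq_mul, ← mul_assoc,
    ← ENNReal.ofReal_mul hs.le, abs_of_pos (inv_pos.mpr hs), mul_inv_cancel₀ hs.ne',
    ENNReal.ofReal_one, one_mul]

lemma lintegral_negg (g : ℝ → ℝ≥0∞) (hg : Measurable g) : ∫⁻ x, g (-x) = ∫⁻ x, g x :=
  (Measure.measurePreserving_neg (volume : Measure ℝ)).lintegral_comp hg

lemma const4 (r : ℝ≥0∞) (hr : r ≠ ⊤) (G : ℝ → ℝ → ℝ → ℝ → ℝ≥0∞) :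
    (∫⁻ a, ∫⁻ c, ∫⁻ d, ∫⁻ z, r * G a c d z) = r * ∫⁻ a, ∫⁻ c, ∫⁻ d, ∫⁻ z, G a c d z := by
  simp_rw [lintegral_const_mul' r _ hr]

lemma scale4 (G : ℝ × ℝ × ℝ × ℝ → ℝ≥0∞) (hG : Measurable G) {s t : ℝ}
    (hs : 0 < s) (ht : 0 < t) :
    (∫⁻ a, ∫⁻ c, ∫⁻ d, ∫⁻ z, G (a, c, d, z))
      = ENNReal.ofReal (s * s * t * s) * ∫⁻ a, ∫⁻ c, ∫⁻ d, ∫⁻ z,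
          G (s * a, s * c, t * d, s * z) := by
  have m1 : Measurable fun a : ℝ => ∫⁻ c, ∫⁻ d, ∫⁻ z, G (a, c, d, z) := meas_nest3 _ hG
  have step1 : (∫⁻ a, ∫⁻ c, ∫⁻ d, ∫⁻ z, G (a, c, d, z))
      = ENNReal.ofReal s * ∫⁻ a, ∫⁻ c, ∫⁻ d, ∫⁻ z, G (s * a, c, d, z) :=
    lintegral_scale _ m1 hs
  have step2 : ∀ a : ℝ, (∫⁻ c, ∫⁻ d, ∫⁻ z, G (s * a, c, d, z))
      = ENNReal.ofReal s * ∫⁻ c, ∫⁻ d, ∫⁻ z, G (s * a, s * c, d, z) := fun a =>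
    lintegral_scale _ (meas_nest2 (fun p => G (s * a, p.1, p.2.1, p.2.2))
      (hG.comp (by fun_prop))) hs
  have step3 : ∀ a c : ℝ, (∫⁻ d, ∫⁻ z, G (s * a, s * c, d, z))
      = ENNReal.ofReal t * ∫⁻ d, ∫⁻ z, G (s * a, s * c, t * d, z) := fun a c =>
    lintegral_scale _ (meas_nest1 (fun p => G (s * a, s * c, p.1, p.2))
      (hG.comp (by fun_prop))) ht
  have step4 : ∀ a c d : ℝ, (∫⁻ z, G (s * a, s * c, t * d, z))
      = ENNReal.ofReal s * ∫⁻ z, G (s * a, s * c, t * d, s * z) := fun a c d =>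
    lintegral_scale _ (hG.comp (by fun_prop)) hs
  rw [step1]
  simp_rw [step2, step3, step4, lintegral_const_mul' _ _ ENNReal.ofReal_ne_top]
  rw [← mul_assoc, ← mul_assoc, ← mul_assoc]
  rw [← ENNReal.ofReal_mul hs.le, ← ENNReal.ofReal_mul (by positivity),
    ← ENNReal.ofReal_mul (by positivity)]
lemma mem_S5_scaled {B w : ℝ} (hB : 1 ≤ B) (hw1 : 1 ≤ |w|) (hw2 : |w| ≤ B) (a c d z : ℝ) :
    (Real.sqrt (B / |w|) * a, Real.sqrt (B / |w|) * c, B * d, Real.sqrt (B / |w|) * z, w)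
      ∈ S5 B ↔ (a, c, d, z) ∈ S4 (if 0 ≤ w then 1 else -1) := by
  set s := Real.sqrt (B / |w|) with hsdef
  set ε := if 0 ≤ w then (1 : ℝ) else -1 with hεdef
  have hB0 : (0:ℝ) < B := lt_of_lt_of_le one_pos hB
  have hw0 : (0:ℝ) < |w| := lt_of_lt_of_le one_pos hw1
  have hs2 : s ^ 2 = B / |w| := Real.sq_sqrt (by positivity)
  have hs : 0 < s := Real.sqrt_pos.mpr (by positivity)
  have key : s ^ 2 * |w| = B := by rw [hs2]; field_simp
  have hsw : s ^ 2 * w = B * ε := by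
    rcases le_or_gt 0 w with h | h
    · rw [hεdef, if_pos h]; rw [abs_of_nonneg h] at key; linarith
    · rw [hεdef, if_neg (not_le.mpr h)]; rw [abs_of_neg h] at key; linarith
  have sqiff : ∀ x : ℝ, (|(s * x) ^ 2 * w| ≤ B ↔ |x| ≤ 1) := by
    intro x
    have h1 : |(s * x) ^ 2 * w| = x ^ 2 * B := by
      rw [abs_mul, abs_of_nonneg (sq_nonneg _)]
      linear_combination x ^ 2 * key
    rw [h1, mul_le_iff_le_one_left hB0, sq_le_one_iff_abs_le_one]
  have fr : |(s * a * (B * d) - (s * z) ^ 3 * w) / (s * c)| ≤ B ↔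
      |(a * d - z ^ 3 * ε) / c| ≤ 1 := by
    have hnum : s * a * (B * d) - (s * z) ^ 3 * w = s * (B * (a * d - z ^ 3 * ε)) := by
      have h3 : (s * z) ^ 3 * w = z ^ 3 * s * (s ^ 2 * w) := by ring
      rw [h3, hsw]; ring
    rw [hnum, mul_div_mul_left _ _ hs.ne', mul_div_assoc, abs_mul, abs_of_pos hB0,
      mul_le_iff_le_one_right hB0]
  have dd : |B * d| ≤ B ↔ |d| ≤ 1 := by
    rw [abs_mul, abs_of_pos hB0, mul_le_iff_le_one_right hB0]
  simp only [S5, S4, mem_setOf_eq]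
  rw [sqiff a, sqiff c, sqiff z, fr, dd]
  tauto

lemma G5_scaled {B w : ℝ} (hB : 1 ≤ B) (hw1 : 1 ≤ |w|) (hw2 : |w| ≤ B) (a c d z : ℝ) :
    G5 B (Real.sqrt (B / |w|) * a, Real.sqrt (B / |w|) * c, B * d, Real.sqrt (B / |w|) * z, w)
      = ENNReal.ofReal (Real.sqrt (B / |w|))⁻¹
        * G4 (if 0 ≤ w then 1 else -1) (a, c, d, z) := by
  set s := Real.sqrt (B / |w|) with hsdef
  have hB0 : (0:ℝ) < B := lt_of_lt_of_le one_pos hB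
  have hw0 : (0:ℝ) < |w| := lt_of_lt_of_le one_pos hw1
  have hs : 0 < s := Real.sqrt_pos.mpr (by positivity)
  by_cases h : (a, c, d, z) ∈ S4 (if 0 ≤ w then 1 else -1)
  · rw [G5, G4, indicator_of_mem ((mem_S5_scaled hB hw1 hw2 a c d z).mpr h),
      indicator_of_mem h]
    show ENNReal.ofReal (1 / |s * c|) = ENNReal.ofReal s⁻¹ * ENNReal.ofReal (1 / |c|)
    rw [← ENNReal.ofReal_mul (by positivity)]
    congr 1
    rw [abs_mul, abs_of_pos hs, one_div, one_div, mul_inv]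
  · rw [G5, G4, indicator_of_notMem (fun hh => h ((mem_S5_scaled hB hw1 hw2 a c d z).mp hh)),
      indicator_of_notMem h, mul_zero]
lemma K_neg :
    (∫⁻ a, ∫⁻ c, ∫⁻ d, ∫⁻ z, G4 (-1) (a, c, d, z))
      = ∫⁻ a, ∫⁻ c, ∫⁻ d, ∫⁻ z, G4 1 (a, c, d, z) := by
  refine lintegral_congr fun a => lintegral_congr fun c => lintegral_congr fun d => ?_
  have m : Measurable fun z : ℝ => G4 (-1) (a, c, d, z) := (meas_G4 _).comp (by fun_prop)
  rw [← lintegral_negg _ m]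
  refine lintegral_congr fun z => ?_
  have hmem : (a, c, d, -z) ∈ S4 (-1) ↔ (a, c, d, z) ∈ S4 1 := by
    simp only [S4, mem_setOf_eq, abs_neg]
    have h : a * d - (-z) ^ 3 * (-1) = a * d - z ^ 3 * 1 := by ring
    rw [h]
  by_cases h : (a, c, d, z) ∈ S4 1
  · rw [G4, G4, indicator_of_mem (hmem.mpr h), indicator_of_mem h]
  · rw [G4, G4, indicator_of_notMem (fun hh => h (hmem.mp hh)), indicator_of_notMem h]

lemma inner_w {B : ℝ} (hB : 1 ≤ B) (w : ℝ) :
    (∫⁻ a, ∫⁻ c, ∫⁻ d, ∫⁻ z, G5 B (a, c, d, z, w))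
      = ({w : ℝ | 1 ≤ |w| ∧ |w| ≤ B}).indicator
          (fun w => ENNReal.ofReal (B ^ 2 / |w|)) w
        * ∫⁻ a, ∫⁻ c, ∫⁻ d, ∫⁻ z, G4 1 (a, c, d, z) := by
  by_cases hw : 1 ≤ |w| ∧ |w| ≤ B
  · obtain ⟨hw1, hw2⟩ := hw
    set s := Real.sqrt (B / |w|) with hsdef
    have hB0 : (0:ℝ) < B := lt_of_lt_of_le one_pos hB
    have hw0 : (0:ℝ) < |w| := lt_of_lt_of_le one_pos hw1
    have hs2 : s ^ 2 = B / |w| := Real.sq_sqrt (by positivity)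
    have hs : 0 < s := Real.sqrt_pos.mpr (by positivity)
    rw [indicator_of_mem (show w ∈ {w : ℝ | 1 ≤ |w| ∧ |w| ≤ B} from ⟨hw1, hw2⟩)]
    have hG : Measurable fun v : ℝ × ℝ × ℝ × ℝ => G5 B (v.1, v.2.1, v.2.2.1, v.2.2.2, w) :=
      (meas_G5 B).comp (by fun_prop)
    rw [scale4 (fun v => G5 B (v.1, v.2.1, v.2.2.1, v.2.2.2, w)) hG hs hB0]
    simp only []
    have hpt : ∀ a c d z : ℝ, G5 B (s * a, s * c, B * d, s * z, w)
        = ENNReal.ofReal s⁻¹ * G4 (if 0 ≤ w then 1 else -1) (a, c, d, z) :=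
      fun a c d z => G5_scaled hB hw1 hw2 a c d z
    simp_rw [hpt]
    rw [const4 _ ENNReal.ofReal_ne_top, ← mul_assoc, ← ENNReal.ofReal_mul (by positivity)]
    have hc : s * s * B * s * s⁻¹ = B ^ 2 / |w| := by
      have h1 : s * s * B * s * s⁻¹ = s * s * B := by field_simp
      rw [h1, ← sq, hs2]; ring
    rw [hc]
    rcases le_or_gt 0 w with h | h
    · rw [if_pos h]
    · rw [if_neg (not_le.mpr h), K_neg]
  · rw [indicator_of_notMem (show w ∉ {w : ℝ | 1 ≤ |w| ∧ |w| ≤ B} from hw), zero_mul]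
    have h0 : ∀ a c d z : ℝ, G5 B (a, c, d, z, w) = 0 := fun a c d z =>
      indicator_of_notMem (fun h => hw ⟨h.1, h.2.1⟩) _
    simp [h0]
lemma pos_part {B : ℝ} (hB : 1 ≤ B) :
    (∫⁻ w in Icc (1:ℝ) B, ENNReal.ofReal (B ^ 2 / |w|))
      = ENNReal.ofReal (B ^ 2 * Real.log B) := by
  have hB0 : (0:ℝ) < B := lt_of_lt_of_le one_pos hB
  have hcong : ∫⁻ w in Icc (1:ℝ) B, ENNReal.ofReal (B ^ 2 / |w|)
      = ∫⁻ w in Icc (1:ℝ) B, ENNReal.ofReal (B ^ 2 / w) := by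
    refine setLIntegral_congr_fun measurableSet_Icc ?_
    intro x hx
    show ENNReal.ofReal (B ^ 2 / |x|) = ENNReal.ofReal (B ^ 2 / x)
    rw [abs_of_pos (lt_of_lt_of_le one_pos hx.1)]
  rw [hcong]
  have hcont : ContinuousOn (fun w : ℝ => B ^ 2 / w) (Icc 1 B) := by
    apply ContinuousOn.div continuousOn_const continuousOn_id
    intro x hx; exact ne_of_gt (lt_of_lt_of_le one_pos hx.1)
  have hint : IntegrableOn (fun w : ℝ => B ^ 2 / w) (Icc 1 B) volume :=
    hcont.integrableOn_Icc
  have hnn : 0 ≤ᵐ[volume.restrict (Icc (1:ℝ) B)] fun w : ℝ => B ^ 2 / w := by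
    rw [Filter.EventuallyLE, ae_restrict_iff' measurableSet_Icc]
    refine Filter.Eventually.of_forall fun x hx => ?_
    have : (0:ℝ) < x := lt_of_lt_of_le one_pos hx.1
    positivity
  rw [← ofReal_integral_eq_lintegral_ofReal hint hnn]
  congr 1
  rw [integral_Icc_eq_integral_Ioc, ← intervalIntegral.integral_of_le hB]
  simp_rw [div_eq_mul_inv]
  rw [intervalIntegral.integral_const_mul, integral_inv (by
    rw [Set.uIcc_of_le hB]; intro h; exact absurd h.1 (by norm_num)), div_one]

lemma wint {B : ℝ} (hB : 1 ≤ B) :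
    (∫⁻ w, ({w : ℝ | 1 ≤ |w| ∧ |w| ≤ B}).indicator
        (fun w => ENNReal.ofReal (B ^ 2 / |w|)) w)
      = ENNReal.ofReal (2 * (B ^ 2 * Real.log B)) := by
  have hB0 : (0:ℝ) < B := lt_of_lt_of_le one_pos hB
  have hset : {w : ℝ | 1 ≤ |w| ∧ |w| ≤ B} = Icc (-B) (-1) ∪ Icc 1 B := by
    ext w
    simp only [mem_setOf_eq, mem_union, mem_Icc]
    rcases abs_cases w with ⟨he, h0⟩ | ⟨he, h0⟩ <;> rw [he] <;> constructor
    · rintro ⟨h1, h2⟩; right; exact ⟨h1, h2⟩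
    · rintro (⟨h1, h2⟩ | ⟨h1, h2⟩) <;> constructor <;> linarith
    · rintro ⟨h1, h2⟩; left; constructor <;> linarith
    · rintro (⟨h1, h2⟩ | ⟨h1, h2⟩) <;> constructor <;> linarith
  have hdisj : Disjoint (Icc (-B) (-1:ℝ)) (Icc 1 B) := by
    rw [Set.disjoint_left]
    rintro x ⟨_, hx2⟩ ⟨hy1, _⟩; linarith
  have hsm : MeasurableSet ({w : ℝ | 1 ≤ |w| ∧ |w| ≤ B}) := by
    rw [hset]; exact (measurableSet_Icc.union measurableSet_Icc)
  rw [lintegral_indicator hsm, hset,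
    lintegral_union measurableSet_Icc hdisj]
  have hneg : (∫⁻ w in Icc (-B) (-1:ℝ), ENNReal.ofReal (B ^ 2 / |w|))
      = ∫⁻ w in Icc (1:ℝ) B, ENNReal.ofReal (B ^ 2 / |w|) := by
    have m1 : Measurable fun w : ℝ => ENNReal.ofReal (B ^ 2 / |w|) := by fun_prop
    rw [← lintegral_indicator (measurableSet_Icc (a := -B) (b := -1)),
      ← lintegral_indicator (measurableSet_Icc (a := (1:ℝ)) (b := B)),
      ← lintegral_negg ((Icc (-B) (-1:ℝ)).indicator fun w => ENNReal.ofReal (B ^ 2 / |w|))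
        (m1.indicator measurableSet_Icc)]
    refine lintegral_congr fun x => ?_
    rw [indicator_apply, indicator_apply]
    have hmem : -x ∈ Icc (-B) (-1:ℝ) ↔ x ∈ Icc (1:ℝ) B := by
      simp only [mem_Icc]
      constructor <;> rintro ⟨h1, h2⟩ <;> constructor <;> linarith
    rw [abs_neg]
    by_cases h : x ∈ Icc (1:ℝ) B
    · rw [if_pos (hmem.mpr h), if_pos h]
    · rw [if_neg (fun hh => h (hmem.mp hh)), if_neg h]
  rw [hneg, pos_part hB, ← ENNReal.ofReal_add (mul_nonneg (sq_nonneg B) (Real.log_nonneg hB))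
      (mul_nonneg (sq_nonneg B) (Real.log_nonneg hB))]
  congr 1; ring
/-- For B ≥ 1 (case n = 2): the integral V₃(B) over (a,c,d,z,w) ∈ ℝ⁵ with
1 ≤ |w| ≤ B, |a²w| ≤ B, |c²w| ≤ B, |z²w| ≤ B, |(ad − z³w)/c| ≤ B, |d| ≤ B of 1/|c|
equals B² log B times 2∫∫∫∫_{|a|,|c|,|z|,|(ad−z³)/c|,|d| ≤ 1} (1/|c|) da dc dd dz. -/
theorem V3_eq (B : ℝ) (hB : 1 ≤ B) :
    (∫ v in {v : ℝ × ℝ × ℝ × ℝ × ℝ |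
        1 ≤ |v.2.2.2.2| ∧ |v.2.2.2.2| ≤ B ∧
        |v.1 ^ 2 * v.2.2.2.2| ≤ B ∧ |v.2.1 ^ 2 * v.2.2.2.2| ≤ B ∧
        |v.2.2.2.1 ^ 2 * v.2.2.2.2| ≤ B ∧
        |(v.1 * v.2.2.1 - v.2.2.2.1 ^ 3 * v.2.2.2.2) / v.2.1| ≤ B ∧
        |v.2.2.1| ≤ B},
      (1 / |v.2.1| : ℝ)) =
    B ^ 2 * Real.log B *
      (2 * ∫ v in {v : ℝ × ℝ × ℝ × ℝ |
          |v.1| ≤ 1 ∧ |v.2.1| ≤ 1 ∧ |v.2.2.2| ≤ 1 ∧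
          |(v.1 * v.2.2.1 - v.2.2.2 ^ 3) / v.2.1| ≤ 1 ∧ |v.2.2.1| ≤ 1},
        (1 / |v.2.1| : ℝ)) := by
  have hB0 : (0:ℝ) < B := lt_of_lt_of_le one_pos hB
  have hlog : 0 ≤ Real.log B := Real.log_nonneg hB
  set K : ℝ≥0∞ := ∫⁻ a, ∫⁻ c, ∫⁻ d, ∫⁻ z, G4 1 (a, c, d, z) with hK
  have hS5 : {v : ℝ × ℝ × ℝ × ℝ × ℝ |
        1 ≤ |v.2.2.2.2| ∧ |v.2.2.2.2| ≤ B ∧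
        |v.1 ^ 2 * v.2.2.2.2| ≤ B ∧ |v.2.1 ^ 2 * v.2.2.2.2| ≤ B ∧
        |v.2.2.2.1 ^ 2 * v.2.2.2.2| ≤ B ∧
        |(v.1 * v.2.2.1 - v.2.2.2.1 ^ 3 * v.2.2.2.2) / v.2.1| ≤ B ∧
        |v.2.2.1| ≤ B} = S5 B := rfl
  have hS4 : {v : ℝ × ℝ × ℝ × ℝ |
          |v.1| ≤ 1 ∧ |v.2.1| ≤ 1 ∧ |v.2.2.2| ≤ 1 ∧
          |(v.1 * v.2.2.1 - v.2.2.2 ^ 3) / v.2.1| ≤ 1 ∧ |v.2.2.1| ≤ 1} = S4 1 := by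
    simp only [S4, mul_one]
  rw [hS5, hS4]
  have m5 : Measurable fun v : ℝ × ℝ × ℝ × ℝ × ℝ => (1 / |v.2.1| : ℝ) := by fun_prop
  have m4 : Measurable fun v : ℝ × ℝ × ℝ × ℝ => (1 / |v.2.1| : ℝ) := by fun_prop
  have l1 : (∫ v in S5 B, (1 / |v.2.1| : ℝ))
      = (∫⁻ v in S5 B, ENNReal.ofReal (1 / |v.2.1|)).toReal :=
    integral_eq_lintegral_of_nonneg_ae
      (Filter.Eventually.of_forall fun v => by positivity) m5.aestronglyMeasurable
  have r1 : (∫ v in S4 1, (1 / |v.2.1| : ℝ))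
      = (∫⁻ v in S4 1, ENNReal.ofReal (1 / |v.2.1|)).toReal :=
    integral_eq_lintegral_of_nonneg_ae
      (Filter.Eventually.of_forall fun v => by positivity) m4.aestronglyMeasurable
  have l2 : (∫⁻ v in S5 B, ENNReal.ofReal (1 / |v.2.1|)) = ∫⁻ v, G5 B v :=
    (lintegral_indicator (measurableSet_S5 B) _).symm
  have r2 : (∫⁻ v in S4 1, ENNReal.ofReal (1 / |v.2.1|)) = K := by
    rw [← lintegral_indicator (measurableSet_S4 1)]
    exact expand4 _ (meas_G4 1)
  have hsm : MeasurableSet {w : ℝ | 1 ≤ |w| ∧ |w| ≤ B} := by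
    simp only [setOf_and]
    exact MeasurableSet.inter (measurableSet_le (by fun_prop) (by fun_prop))
      (measurableSet_le (by fun_prop) (by fun_prop))
  have l3 : (∫⁻ v, G5 B v) = ENNReal.ofReal (2 * (B ^ 2 * Real.log B)) * K := by
    rw [expand5 _ (meas_G5 B), lintegral_congr fun w => inner_w hB w,
      lintegral_mul_const _ ((by fun_prop : Measurable fun w : ℝ =>
        ENNReal.ofReal (B ^ 2 / |w|)).indicator hsm),
      wint hB, mul_comm]
  rw [l1, r1, l2, r2, l3, ENNReal.toReal_mul, ENNReal.toReal_ofReal (by positivity)]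
  ring
end
end
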